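/- For every fixed real τ with 0 < τ < 1, the function k ↦ θ(τ, -τ^{k-1}) = Σ_{j=0}^∞ (-1)^j τ^{k·j + j(j-1)/2} is strictly increasing on the interval (0, ∞) of real values of k. -/

import Mathlib

/-- The partial theta function `θ(q,x) = ∑_{j=0}^∞ q^(j(j+1)/2) x^j`. -/
noncomputable def theta (q x : ℝ) : ℝ := ∑' j : ℕ, q ^ (j * (j + 1) / 2) * x ^ j

set_option maxHeartbeats 1000000

namespace ThetaProof

lemma tri_succ (j : ℕ) : (j+1) * ((j+1)+1) / 2 = j*(j+1)/2 + (j+1) := by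
  obtain ⟨a, ha⟩ := Nat.even_mul_succ_self j
  have key : (j+1) * ((j+1)+1) = j*(j+1) + 2*(j+1) := by ring
  rw [key, ha]
  omega

lemma tri_add (i j : ℕ) : (i+j) * ((i+j)+1) / 2 = i*(i+1)/2 + (j*(j+1)/2 + i*j) := by
  obtain ⟨a, ha⟩ := Nat.even_mul_succ_self i
  obtain ⟨b, hb⟩ := Nat.even_mul_succ_self j
  have key : (i+j) * ((i+j)+1) = i*(i+1) + (j*(j+1) + 2*(i*j)) := by ring
  rw [key, ha, hb]
  generalize i*j = c
  omega

variable {q : ℝ}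

lemma summable_theta_body (hq0 : 0 < q) (hq1 : q < 1) (x : ℝ) :
    Summable (fun j : ℕ => q ^ (j * (j + 1) / 2) * x ^ j) := by
  apply summable_of_ratio_norm_eventually_le (r := 1/2) (by norm_num)
  have h0 : Filter.Tendsto (fun n : ℕ => q ^ (n+1) * |x|) Filter.atTop (nhds 0) := by
    have h := (tendsto_pow_atTop_nhds_zero_of_lt_one hq0.le hq1).mul_const |x|
    rw [zero_mul] at h
    exact h.comp (Filter.tendsto_add_atTop_nat 1)
  have h1 : ∀ᶠ n in Filter.atTop, q ^ (n+1) * |x| < 1/2 :=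
    h0.eventually (gt_mem_nhds (by norm_num))
  filter_upwards [h1] with n hn
  have e0 : ∀ m : ℕ, ‖q ^ (m*(m+1)/2) * x ^ m‖ = q ^ (m*(m+1)/2) * |x| ^ m := by
    intro m
    rw [norm_mul, norm_pow, norm_pow, Real.norm_eq_abs, Real.norm_eq_abs,
      abs_of_pos hq0]
  rw [e0, e0]
  have e1 : q ^ ((n+1)*((n+1)+1)/2) * |x| ^ (n+1)
      = (q ^ (n+1) * |x|) * (q ^ (n*(n+1)/2) * |x| ^ n) := by
    rw [tri_succ n, pow_add]
    ring
  rw [e1]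
  exact mul_le_mul_of_nonneg_right hn.le (by positivity)

lemma theta_fe (hq0 : 0 < q) (hq1 : q < 1) (x : ℝ) :
    theta q x = 1 + q * x * theta q (q * x) := by
  have hs : Summable (fun n : ℕ => q ^ ((n+1)*((n+1)+1)/2) * x ^ (n+1)) :=
    (summable_nat_add_iff 1).2 (summable_theta_body hq0 hq1 x)
  rw [theta, tsum_eq_zero_add' hs]
  congr 1
  · norm_num
  calc ∑' n:ℕ, q ^ ((n+1)*((n+1)+1)/2) * x^(n+1)
      = ∑' n:ℕ, (q*x) * (q ^ (n*(n+1)/2) * (q*x)^n) := by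
        refine tsum_congr fun n => ?_
        rw [tri_succ n, pow_add, mul_pow]
        ring
    _ = q * x * theta q (q*x) := by rw [tsum_mul_left, theta, mul_assoc]

lemma theta_neg_fe (hq0 : 0 < q) (hq1 : q < 1) (x : ℝ) :
    theta q (-x) = 1 - q * x * theta q (-(q*x)) := by
  have h := theta_fe hq0 hq1 (-x)
  rw [mul_neg] at h
  rw [h]
  ring

lemma le_tri (j : ℕ) : j ≤ j*(j+1)/2 := by
  rcases Nat.eq_zero_or_pos j with h | h
  · simp [h]
  have h2 : j*2 ≤ j*(j+1) := Nat.mul_le_mul_left j (by omega)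
  calc j = j*2/2 := by omega
    _ ≤ j*(j+1)/2 := Nat.div_le_div_right h2

lemma summable_qT (hq0 : 0 < q) (hq1 : q < 1) :
    Summable (fun j : ℕ => q ^ (j*(j+1)/2)) := by
  simpa using summable_theta_body hq0 hq1 1

lemma abs_theta_le (hq0 : 0 < q) (hq1 : q < 1) {s : ℝ} (h0 : 0 ≤ s) (h1 : s ≤ 1) :
    |theta q (-s)| ≤ (1 - q)⁻¹ := by
  have hsum : Summable (fun j : ℕ => ‖q ^ (j*(j+1)/2) * (-s)^j‖) := by
    simp only [Real.norm_eq_abs]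
    exact (summable_theta_body hq0 hq1 (-s)).abs
  have h2 : |theta q (-s)| ≤ ∑' j : ℕ, ‖q ^ (j*(j+1)/2) * (-s)^j‖ := by
    rw [theta, ← Real.norm_eq_abs]
    exact norm_tsum_le_tsum_norm hsum
  have h3 : ∑' j : ℕ, ‖q ^ (j*(j+1)/2) * (-s)^j‖ ≤ ∑' j : ℕ, q ^ j := by
    apply Summable.tsum_le_tsum _ hsum (summable_geometric_of_lt_one hq0.le hq1)
    intro j
    rw [norm_mul, norm_pow, norm_pow, Real.norm_eq_abs, Real.norm_eq_abs,
      abs_of_pos hq0, abs_neg, abs_of_nonneg h0]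
    calc q ^ (j*(j+1)/2) * s ^ j ≤ q ^ j * 1 := by
          apply mul_le_mul _ (pow_le_one₀ h0 h1) (by positivity) (by positivity)
          exact pow_le_pow_of_le_one hq0.le hq1.le (le_tri j)
      _ = q ^ j := mul_one _
  calc |theta q (-s)| ≤ ∑' j : ℕ, q ^ j := h2.trans h3
    _ = (1-q)⁻¹ := tsum_geometric_of_lt_one hq0.le hq1

lemma F_rec (hq0 : 0 < q) (hq1 : q < 1) (s : ℝ) :
    s * theta q (-s) = s - q * s^2 + q*s^2 * ((q^2*s) * theta q (-(q^2*s))) := by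
  rw [theta_neg_fe hq0 hq1 s, theta_neg_fe hq0 hq1 (q*s)]
  have h : q * (q * s) = q^2 * s := by ring
  rw [h]
  ring


lemma B_step (hq0 : 0 < q) (hq1 : q < 1) {s : ℝ} (h0 : 0 ≤ s) (h1 : s ≤ 1) :
    s - q*s^2 + q*s^2 * (q^2*s / (1 + q*(q^2*s))) ≤ s / (1+q*s) := by
  have hqs : 0 ≤ q*s := mul_nonneg hq0.le h0
  have hq3s : 0 ≤ q*(q^2*s) := by positivity
  have d1 : 0 < 1 + q*s := by linarith
  have d2 : 0 < 1 + q*(q^2*s) := by linarith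
  have key : s/(1+q*s) - (s - q*s^2 + q*s^2 * (q^2*s / (1+q*(q^2*s))))
      = q^2*s^3*(1-q)*(1-q^2*s) / ((1+q*s)*(1+q*(q^2*s))) := by
    field_simp
    ring
  have h2 : q^2*s ≤ 1 := by nlinarith
  have h3 : 0 ≤ q^2*s^3*(1-q)*(1-q^2*s) / ((1+q*s)*(1+q*(q^2*s))) := by
    apply div_nonneg _ (mul_pos d1 d2).le
    have ha : 0 ≤ q^2*s^3*(1-q) :=
      mul_nonneg (mul_nonneg (by positivity : (0:ℝ) ≤ q^2) (pow_nonneg h0 3)) (by linarith)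
    exact mul_nonneg ha (by linarith)
  linarith

lemma F_le_B (hq0 : 0 < q) (hq1 : q < 1) :
    ∀ s : ℝ, 0 ≤ s → s ≤ 1 → s * theta q (-s) ≤ s / (1 + q * s) := by
  have hC : (0:ℝ) ≤ (1-q)⁻¹ := inv_nonneg.2 (by linarith)
  have key : ∀ n : ℕ, ∀ s : ℝ, 0 ≤ s → s ≤ 1 →
      s * theta q (-s) - s / (1 + q*s) ≤ q ^ n * (1-q)⁻¹ := by
    intro n
    induction n with
    | zero =>
      intro s h0 h1
      have h2 := abs_theta_le hq0 hq1 h0 h1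
      have h3 : 0 ≤ s / (1+q*s) := div_nonneg h0 (by nlinarith)
      have h4 : s * theta q (-s) ≤ (1-q)⁻¹ := by
        calc s * theta q (-s) ≤ s * |theta q (-s)| := by
              have := le_abs_self (theta q (-s)); nlinarith
          _ ≤ 1 * (1-q)⁻¹ := by
              apply mul_le_mul h1 h2 (abs_nonneg _) (by norm_num)
          _ = (1-q)⁻¹ := one_mul _
      simpa using by linarith
    | succ n ih =>
      intro s h0 h1
      have hs'0 : (0:ℝ) ≤ q^2*s := by positivity
      have hs'1 : q^2*s ≤ 1 := by nlinarith
      have ihs := ih (q^2*s) hs'0 hs'1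
      have hrec := F_rec hq0 hq1 s
      have hBs := B_step hq0 hq1 h0 h1
      have hqs2 : (0:ℝ) ≤ q*s^2 := by positivity
      have e1 : q*s^2 * ((q^2*s) * theta q (-(q^2*s)) - q^2*s/(1+q*(q^2*s)))
          ≤ q*s^2 * (q^n * (1-q)⁻¹) := mul_le_mul_of_nonneg_left ihs hqs2
      rw [mul_sub] at e1
      have hss : q*s^2 ≤ q := by nlinarith
      have e2 : q*s^2 * (q^n * (1-q)⁻¹) ≤ q * (q^n * (1-q)⁻¹) :=
        mul_le_mul_of_nonneg_right hss (by positivity)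
      have e3 : q * (q^n * (1-q)⁻¹) = q^(n+1) * (1-q)⁻¹ := by ring
      linarith
  intro s h0 h1
  have hlim : Filter.Tendsto (fun n:ℕ => q^n * (1-q)⁻¹) Filter.atTop (nhds 0) := by
    have h := (tendsto_pow_atTop_nhds_zero_of_lt_one hq0.le hq1).mul_const (1-q)⁻¹
    rwa [zero_mul] at h
  have h5 : s * theta q (-s) - s / (1+q*s) ≤ 0 :=
    ge_of_tendsto' hlim (fun n => key n s h0 h1)
  linarith

lemma bracket_pos (hq0 : 0 < q) (hq1 : q < 1) {u v : ℝ}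
    (hu0 : 0 < u) (hu1 : u < 1) (hv0 : 0 < v) (hv1 : v < 1) (m : ℕ) :
    0 < 1 - (u+v) * q^(2*m+1) * theta q (-(u * q^(2*m+1))) := by
  set p := q^(2*m+1) with hp
  have hp0 : 0 < p := pow_pos hq0 _
  have hpq : p ≤ q := by
    calc p = q^(2*m+1) := rfl
      _ ≤ q^1 := pow_le_pow_of_le_one hq0.le hq1.le (by omega)
      _ = q := pow_one q
  have hs0 : (0:ℝ) ≤ u*p := by positivity
  have hs1 : u*p ≤ 1 := by nlinarith
  have hFB := F_le_B hq0 hq1 (u*p) hs0 hs1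
  set θ := theta q (-(u*p)) with hθ
  rcases le_or_gt θ 0 with h | h
  · have : (u+v)*p*θ ≤ 0 := by
      apply mul_nonpos_of_nonneg_of_nonpos _ h
      positivity
    linarith
  · have hd : 0 < 1 + q*(u*p) := by positivity
    have hθle : θ * (1+q*(u*p)) ≤ 1 := by
      have hup : 0 < u*p := mul_pos hu0 hp0
      have h7 := mul_le_mul_of_nonneg_right hFB hd.le
      have h8 : u*p / (1+q*(u*p)) * (1+q*(u*p)) = u*p := by field_simp
      rw [h8] at h7
      have h9 : u*p*(θ*(1+q*(u*p))) ≤ u*p*1 := by rw [mul_one]; linarith [h7]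
      exact le_of_mul_le_mul_left h9 hup
    have a1 : u*p < q := lt_of_lt_of_le (by nlinarith) hpq
    have a2 : v*p < q := lt_of_lt_of_le (by nlinarith) hpq
    have hkey : (u+v)*p < 1 + q*(u*p) := by
      nlinarith [mul_nonneg (sub_pos.2 a1).le (by linarith : (0:ℝ) ≤ 1 - q),
        sq_nonneg (1-q)]
    have h5 : (u+v)*p*θ < (1+q*(u*p))*θ := mul_lt_mul_of_pos_right hkey h
    have h6 : (1+q*(u*p))*θ ≤ 1 := by linarith [hθle]
    linarith
section Rearrange

variable {u v : ℝ}

/-- the double-indexed family; `p.1 = j` (the `v` index), `p.2 = i` (the `u` index). -/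
noncomputable def g (q u v : ℝ) (p : ℕ × ℕ) : ℝ :=
  (-1:ℝ)^(p.1+p.2) * q^((p.1+p.2)*((p.1+p.2)+1)/2) * v^p.1 * u^p.2

lemma summable_g (hq0 : 0 < q) (hq1 : q < 1) (hu0 : 0 ≤ u) (hu1 : u ≤ 1)
    (hv0 : 0 ≤ v) (hv1 : v ≤ 1) : Summable (g q u v) := by
  have hmaj : Summable (fun p : ℕ×ℕ => q^(p.1*(p.1+1)/2) * q^(p.2*(p.2+1)/2)) :=
    Summable.mul_of_nonneg (summable_qT hq0 hq1) (summable_qT hq0 hq1)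
      (fun j => by positivity) (fun j => by positivity)
  apply Summable.of_abs
  apply Summable.of_nonneg_of_le (fun p => abs_nonneg _) _ hmaj
  rintro ⟨j, i⟩
  rw [g]
  simp only []
  rw [abs_mul, abs_mul, abs_mul, abs_pow, abs_pow, abs_pow, abs_pow, abs_neg, abs_one,
    one_pow, one_mul, abs_of_pos hq0, abs_of_nonneg hv0, abs_of_nonneg hu0]
  calc q ^ ((j+i)*((j+i)+1)/2) * v^j * u^i ≤ q ^ ((j+i)*((j+i)+1)/2) * 1 * 1 := by
        apply mul_le_mul _ (pow_le_one₀ hu0 hu1) (by positivity) (by positivity)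
        apply mul_le_mul le_rfl (pow_le_one₀ hv0 hv1) (by positivity) (by positivity)
    _ = q ^ ((j+i)*((j+i)+1)/2) := by ring
    _ ≤ q ^ (j*(j+1)/2 + i*(i+1)/2) := by
        apply pow_le_pow_of_le_one hq0.le hq1.le
        rw [tri_add j i]
        omega
    _ = q^(j*(j+1)/2) * q^(i*(i+1)/2) := pow_add q _ _

lemma sum_g_eq_S (hq0 : 0 < q) (hq1 : q < 1) (hu0 : 0 ≤ u) (hu1 : u ≤ 1)
    (hv0 : 0 ≤ v) (hv1 : v ≤ 1) :
    ∑' p : ℕ×ℕ, g q u v p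
      = ∑' j : ℕ, ((-1:ℝ)^j * v^j * q^(j*(j+1)/2)) * theta q (-(u*q^j)) := by
  rw [Summable.tsum_prod (summable_g hq0 hq1 hu0 hu1 hv0 hv1)]
  refine tsum_congr fun j => ?_
  have hterm : ∀ i : ℕ, g q u v (j, i)
      = ((-1:ℝ)^j * v^j * q^(j*(j+1)/2)) * (q^(i*(i+1)/2) * (-(u*q^j))^i) := by
    intro i
    rw [g]
    simp only []
    rw [tri_add j i, pow_add, pow_add, pow_add, neg_pow (u*q^j) i, mul_pow, pow_mul']
    ring
  calc ∑' i, g q u v (j, i)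
      = ∑' i, ((-1:ℝ)^j * v^j * q^(j*(j+1)/2)) * (q^(i*(i+1)/2) * (-(u*q^j))^i) :=
        tsum_congr hterm
    _ = ((-1:ℝ)^j * v^j * q^(j*(j+1)/2)) * theta q (-(u*q^j)) := by
        rw [tsum_mul_left, theta]

lemma sum_g_eq_diag (hq0 : 0 < q) (hq1 : q < 1) (hu0 : 0 ≤ u) (hu1 : u ≤ 1)
    (hv0 : 0 ≤ v) (hv1 : v ≤ 1) :
    (u - v) * ∑' p : ℕ×ℕ, g q u v p = u * theta q (-u) - v * theta q (-v) := by
  have hg := summable_g hq0 hq1 hu0 hu1 hv0 hv1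
  -- step 1: sum over sigma of antidiagonals
  have e1 : ∑' p : ℕ×ℕ, g q u v p
      = ∑' n : ℕ, ∑ p ∈ Finset.HasAntidiagonal.antidiagonal n, g q u v p := by
    have hgs : Summable (fun x : Σ n : ℕ, Finset.HasAntidiagonal.antidiagonal n => g q u v x.2) :=
      Finset.HasAntidiagonal.sigmaAntidiagonalEquivProd.summable_iff.2 hg
    have e0 : ∑' x : Σ n : ℕ, Finset.HasAntidiagonal.antidiagonal n, g q u v x.2 = ∑' p : ℕ×ℕ, g q u v p :=
      Finset.HasAntidiagonal.sigmaAntidiagonalEquivProd.tsum_eq (g q u v)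
    rw [← e0, Summable.tsum_sigma hgs]
    exact tsum_congr fun n => Finset.tsum_subtype (Finset.HasAntidiagonal.antidiagonal n) (g q u v)
  -- step 2: compute each antidiagonal sum
  have e2 : ∀ n : ℕ, (u - v) * ∑ p ∈ Finset.HasAntidiagonal.antidiagonal n, g q u v p
      = u * (q^(n*(n+1)/2) * (-u)^n) - v * (q^(n*(n+1)/2) * (-v)^n) := by
    intro n
    have h3 : ∑ p ∈ Finset.HasAntidiagonal.antidiagonal n, g q u v p
        = ((-1:ℝ)^n * q^(n*(n+1)/2)) * ∑ i ∈ Finset.range (n+1), v^i * u^(n-i) := by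
      rw [Finset.mul_sum]
      rw [Finset.Nat.sum_antidiagonal_eq_sum_range_succ_mk (g q u v) n]
      refine Finset.sum_congr rfl fun i _ => ?_
      rw [g]
      simp only []
      have : i + (n - i) = n := by
        have : i ∈ Finset.range (n+1) := by assumption
        have := Finset.mem_range.1 this
        omega
      rw [this]
      ring
    rw [h3]
    have h4 : (∑ i ∈ Finset.range (n+1), v^i * u^((n+1)-1-i)) * (v - u)
        = v^(n+1) - u^(n+1) := geom_sum₂_mul v u (n+1)
    simp only [Nat.add_sub_cancel] at h4
    have h5 : (u - v) * ∑ i ∈ Finset.range (n+1), v^i * u^(n-i)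
        = u^(n+1) - v^(n+1) := by
      have := h4
      nlinarith [h4]
    calc (u - v) * (((-1:ℝ)^n * q^(n*(n+1)/2)) * ∑ i ∈ Finset.range (n+1), v^i * u^(n-i))
        = ((-1:ℝ)^n * q^(n*(n+1)/2)) * ((u - v) * ∑ i ∈ Finset.range (n+1), v^i * u^(n-i)) := by
          ring
      _ = ((-1:ℝ)^n * q^(n*(n+1)/2)) * (u^(n+1) - v^(n+1)) := by rw [h5]
      _ = u * (q^(n*(n+1)/2) * (-u)^n) - v * (q^(n*(n+1)/2) * (-v)^n) := by
          rw [neg_pow u n, neg_pow v n]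
          ring
  -- step 3: combine
  have hsu : Summable (fun n : ℕ => u * (q^(n*(n+1)/2) * (-u)^n)) :=
    (summable_theta_body hq0 hq1 (-u)).mul_left u
  have hsv : Summable (fun n : ℕ => v * (q^(n*(n+1)/2) * (-v)^n)) :=
    (summable_theta_body hq0 hq1 (-v)).mul_left v
  rw [e1, ← tsum_mul_left]
  calc ∑' n : ℕ, (u - v) * ∑ p ∈ Finset.HasAntidiagonal.antidiagonal n, g q u v p
      = ∑' n : ℕ, (u * (q^(n*(n+1)/2) * (-u)^n) - v * (q^(n*(n+1)/2) * (-v)^n)) :=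
        tsum_congr e2
    _ = (∑' n : ℕ, u * (q^(n*(n+1)/2) * (-u)^n)) - ∑' n : ℕ, v * (q^(n*(n+1)/2) * (-v)^n) :=
        Summable.tsum_sub hsu hsv
    _ = u * theta q (-u) - v * theta q (-v) := by
        simp only [theta, tsum_mul_left]

end Rearrange

lemma S_pos (hq0 : 0 < q) (hq1 : q < 1) {u v : ℝ}
    (hu0 : 0 < u) (hu1 : u < 1) (hv0 : 0 < v) (hv1 : v < 1) :
    0 < ∑' j : ℕ, ((-1:ℝ)^j * v^j * q^(j*(j+1)/2)) * theta q (-(u*q^j)) := by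
  set a : ℕ → ℝ := fun j => ((-1:ℝ)^j * v^j * q^(j*(j+1)/2)) * theta q (-(u*q^j)) with ha
  have habs : ∀ j : ℕ, |a j| ≤ q^(j*(j+1)/2) * (1-q)⁻¹ := by
    intro j
    have h1 : (0:ℝ) ≤ u * q^j := by positivity
    have h2 : u * q^j ≤ 1 := by
      have : q^j ≤ 1 := pow_le_one₀ hq0.le hq1.le
      nlinarith
    have h3 := abs_theta_le hq0 hq1 h1 h2
    rw [ha]
    simp only []
    rw [abs_mul, abs_mul, abs_mul, abs_pow, abs_pow, abs_pow, abs_neg, abs_one, one_pow,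
      one_mul, abs_of_pos hq0, abs_of_pos hv0]
    calc v^j * q^(j*(j+1)/2) * |theta q (-(u*q^j))| 
        ≤ 1 * q^(j*(j+1)/2) * (1-q)⁻¹ := by
          apply mul_le_mul _ h3 (abs_nonneg _) (by positivity)
          apply mul_le_mul (pow_le_one₀ hv0.le hv1.le) le_rfl (by positivity) (by norm_num)
      _ = q^(j*(j+1)/2) * (1-q)⁻¹ := by ring
  have hsa : Summable a := by
    apply Summable.of_abs
    apply Summable.of_nonneg_of_le (fun j => abs_nonneg _) habs
    exact (summable_qT hq0 hq1).mul_right _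
  have he : Summable (fun m : ℕ => a (2*m)) :=
    hsa.comp_injective (fun x y h => by omega)
  have ho : Summable (fun m : ℕ => a (2*m+1)) :=
    hsa.comp_injective (fun x y h => by omega)
  have hpair : ∀ m : ℕ, a (2*m) + a (2*m+1)
      = v^(2*m) * q^((2*m)*(2*m+1)/2) * (1 - (u+v) * q^(2*m+1) * theta q (-(u * q^(2*m+1)))) := by
    intro m
    have hfe : theta q (-(u*q^(2*m))) = 1 - u*q^(2*m+1) * theta q (-(u*q^(2*m+1))) := by
      have h := theta_neg_fe hq0 hq1 (u*q^(2*m))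
      have h2 : q * (u*q^(2*m)) = u*q^(2*m+1) := by ring
      rw [h2] at h
      rw [h]
    have hT : (2*m+1)*((2*m+1)+1)/2 = (2*m)*((2*m)+1)/2 + (2*m+1) := tri_succ (2*m)
    rw [ha]
    simp only []
    rw [hfe, hT, pow_add]
    have hodd : ((-1:ℝ))^(2*m+1) = -1 := by
      rw [pow_succ]
      simp [pow_mul]
    have heven : ((-1:ℝ))^(2*m) = 1 := by simp [pow_mul]
    rw [hodd, heven]
    ring
  have hpairpos : ∀ m : ℕ, 0 < a (2*m) + a (2*m+1) := by
    intro m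
    rw [hpair m]
    apply mul_pos (by positivity)
    exact bracket_pos hq0 hq1 hu0 hu1 hv0 hv1 m
  have hsum : ∑' j, a j = ∑' m : ℕ, (a (2*m) + a (2*m+1)) := by
    rw [← tsum_even_add_odd he ho, Summable.tsum_add he ho]
  rw [hsum]
  exact Summable.tsum_pos (he.add ho) (fun m => (hpairpos m).le) 0 (hpairpos 0)

end ThetaProof

theorem stmt_9 (τ : ℝ) (hτ₁ : 0 < τ) (hτ₂ : τ < 1) :
    StrictMonoOn (fun k : ℝ => theta τ (-(τ ^ (k - 1)))) (Set.Ioi (0 : ℝ)) := by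
  intro k₁ hk₁ k₂ hk₂ hlt
  simp only [Set.mem_Ioi] at hk₁ hk₂
  have h1 : ∀ k : ℝ, theta τ (-(τ ^ (k-1))) = 1 - (τ ^ k) * theta τ (-(τ ^ k)) := by
    intro k
    have h := ThetaProof.theta_neg_fe hτ₁ hτ₂ (τ ^ (k-1))
    have h2 : τ * τ ^ (k-1) = τ ^ k := by
      have h3 := Real.rpow_add hτ₁ 1 (k-1)
      rw [Real.rpow_one] at h3
      rw [← h3]
      norm_num
    rw [h, h2]
  simp only [h1]
  have hu0 : (0:ℝ) < τ ^ k₁ := Real.rpow_pos_of_pos hτ₁ _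
  have hv0 : (0:ℝ) < τ ^ k₂ := Real.rpow_pos_of_pos hτ₁ _
  have hu1 : τ ^ k₁ < 1 := Real.rpow_lt_one hτ₁.le hτ₂ hk₁
  have hv1 : τ ^ k₂ < 1 := Real.rpow_lt_one hτ₁.le hτ₂ hk₂
  have huv : τ ^ k₂ < τ ^ k₁ := Real.rpow_lt_rpow_of_exponent_gt hτ₁ hτ₂ hlt
  set u := τ ^ k₁
  set v := τ ^ k₂
  have hdiag := ThetaProof.sum_g_eq_diag (u := u) (v := v) hτ₁ hτ₂ hu0.le hu1.le hv0.le hv1.le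
  have hS := ThetaProof.sum_g_eq_S (u := u) (v := v) hτ₁ hτ₂ hu0.le hu1.le hv0.le hv1.le
  have hSpos := ThetaProof.S_pos hτ₁ hτ₂ hu0 hu1 hv0 hv1
  have hpos : 0 < u * theta τ (-u) - v * theta τ (-v) := by
    rw [← hdiag, hS]
    exact mul_pos (by linarith) hSpos
  linarith
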